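/- Suppose G* ⊆ Q⁰_λ is ≤⁰-directed and ≤⁰-downward closed, p ∈ G*, X ⊆ C^p has cardinality λ, C ⊆ C^p is a club of λ such that p is restrictable to ⟨X, C⟩, and ⋃_{x∈X} Z^p_x ∈ fil(G*). Then p↾⟨X,C⟩ ∈ G*. -/

import Mathlib

open Set

noncomputable section

def IsUltrafilterOn {α : Type*} (Z : Set α) (d : Set (Set α)) : Prop :=
  (∀ A ∈ d, A ⊆ Z) ∧ Z ∈ d ∧ ∅ ∉ d ∧
  (∀ A B : Set α, A ∈ d → A ⊆ B → B ⊆ Z → B ∈ d) ∧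
  (∀ A B : Set α, A ∈ d → B ∈ d → A ∩ B ∈ d) ∧
  (∀ A : Set α, A ⊆ Z → (A ∈ d ∨ Z \ A ∈ d))

def IsNonprincipalOn {α : Type*} (Z : Set α) (d : Set (Set α)) : Prop :=
  IsUltrafilterOn Z d ∧ ∀ x : α, {x} ∉ d

def IsClubIn (C : Set Ordinal) (lam : Ordinal) : Prop :=
  C ⊆ Iio lam ∧ (∀ β < lam, ∃ δ ∈ C, β < δ) ∧
  (∀ β < lam, β ≠ 0 → sSup (C ∩ Iio β) = β → β ∈ C)

def nextIn (C : Set Ordinal) (δ : Ordinal) : Ordinal := sInf (C \ Iic δ)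

/-- An element of `Q⁰_λ`: a club `C` of limit ordinals below `λ`, together with
a non-principal ultrafilter `d δ` on the interval `Z_δ = [δ, min(C ∖ (δ+1)))` for each `δ ∈ C`. -/
structure QZero (lam : Ordinal) where
  C : Set Ordinal
  d : Ordinal → Set (Set Ordinal)
  club : IsClubIn C lam
  limit : ∀ δ ∈ C, Order.IsSuccLimit δ
  ultra : ∀ δ ∈ C, IsNonprincipalOn (Ico δ (nextIn C δ)) (d δ)

def QZero.Z {lam : Ordinal} (p : QZero lam) (δ : Ordinal) : Set Ordinal :=
  Ico δ (nextIn p.C δ)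

def fil {lam : Ordinal} (p : QZero lam) : Set (Set Ordinal) :=
  {A | A ⊆ Iio lam ∧ ∃ ε < lam, ∀ δ ∈ p.C, ε ≤ δ → A ∩ p.Z δ ∈ p.d δ}

def le0 {lam : Ordinal} (p q : QZero lam) : Prop := fil p ⊆ fil q

def filG {lam : Ordinal} (G : Set (QZero lam)) : Set (Set Ordinal) :=
  ⋃ p ∈ G, fil p

/-- `p` is restrictable to `⟨X, C⟩`. -/
def Restrictable (κ : Cardinal.{0}) (p : QZero κ.ord) (X C : Set Ordinal) : Prop :=
  X ⊆ p.C ∧ Cardinal.mk ↥X = Cardinal.lift.{1,0} κ ∧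
  IsClubIn C κ.ord ∧ C ⊆ p.C ∧
  ∀ α ∈ C, ∃! x, x ∈ X ∩ Ico α (nextIn C α)


-- next is a member, bigger, below lam
lemma nextIn_spec {C : Set Ordinal} {lam δ : Ordinal} (hC : IsClubIn C lam)
    (hδ : δ < lam) : nextIn C δ ∈ C ∧ δ < nextIn C δ ∧ nextIn C δ < lam := by
  obtain ⟨γ, hγC, hγ⟩ := hC.2.1 δ hδ
  have hne : (C \ Iic δ).Nonempty := ⟨γ, hγC, by simpa using hγ⟩
  have hmem := csInf_mem hne
  exact ⟨hmem.1, by simpa [nextIn] using hmem.2, hC.1 hmem.1⟩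

lemma nextIn_le {C : Set Ordinal} {δ x : Ordinal} (hx : x ∈ C) (hδx : δ < x) :
    nextIn C δ ≤ x := csInf_le (OrderBot.bddBelow _) ⟨hx, by simpa using hδx⟩

lemma pred_in_club {C : Set Ordinal} {lam γ x : Ordinal} (hC : IsClubIn C lam)
    (h0 : 0 ∉ C) (hγ : γ ∈ C) (hγx : γ ≤ x) (hx : x < lam) :
    ∃ α ∈ C, γ ≤ α ∧ α ≤ x ∧ x < nextIn C α := by
  set β := sSup (C ∩ Iic x) with hβ
  have hne : (C ∩ Iic x).Nonempty := ⟨γ, hγ, hγx⟩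
  have hbdd : BddAbove (C ∩ Iic x) := ⟨x, fun y hy => hy.2⟩
  have hβx : β ≤ x := csSup_le hne (fun y hy => hy.2)
  have hγβ : γ ≤ β := le_csSup hbdd ⟨hγ, hγx⟩
  have hβC : β ∈ C := by
    by_cases hc : β ∈ C
    · exact hc
    · refine hC.2.2 β (lt_of_le_of_lt hβx hx) ?_ ?_
      · intro hβ0
        have : γ = 0 := nonpos_iff_eq_zero.1 (hβ0 ▸ hγβ)
        exact h0 (this ▸ hγ)
      · have : C ∩ Iio β = C ∩ Iic x := by
          ext y
          constructor
          · rintro ⟨hyC, hy⟩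
            exact ⟨hyC, le_trans (le_of_lt hy) hβx⟩
          · rintro ⟨hyC, hy⟩
            refine ⟨hyC, lt_of_le_of_ne (le_csSup hbdd ⟨hyC, hy⟩) ?_⟩
            rintro rfl; exact hc hyC
        rw [this]
  refine ⟨β, hβC, hγβ, hβx, ?_⟩
  by_contra hle
  push_neg at hle
  have h1 := nextIn_spec hC (lt_of_le_of_lt hβx hx)
  have : nextIn C β ≤ β := le_csSup hbdd ⟨h1.1, hle⟩
  exact absurd h1.2.1 (not_lt.2 this)

-- disjointness of intervals
lemma Z_disjoint {lam : Ordinal} (p : QZero lam) {δ x : Ordinal}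
    (hδ : δ ∈ p.C) (hx : x ∈ p.C) (hne : δ ≠ x) : p.Z δ ∩ p.Z x = ∅ := by
  have key : ∀ a b : Ordinal, a ∈ p.C → b ∈ p.C → a < b → p.Z a ∩ p.Z b = ∅ := by
    intro a b ha hb hab
    apply eq_empty_of_forall_notMem
    rintro y ⟨⟨_, hy2⟩, ⟨hy3, _⟩⟩
    exact absurd (lt_of_lt_of_le hy2 (nextIn_le hb hab)) (not_lt.2 hy3)
  rcases lt_or_gt_of_ne hne with hlt | hgt
  · exact key δ x hδ hx hlt
  · rw [Set.inter_comm]; exact key x δ hx hδ hgt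

-- fil is closed under pairwise intersection
lemma fil_inter {lam : Ordinal} (s : QZero lam) {A B : Set Ordinal}
    (hA : A ∈ fil s) (hB : B ∈ fil s) : A ∩ B ∈ fil s := by
  obtain ⟨hA1, ε₁, hε₁, hA2⟩ := hA
  obtain ⟨hB1, ε₂, hε₂, hB2⟩ := hB
  refine ⟨fun y hy => hA1 hy.1, max ε₁ ε₂, max_lt hε₁ hε₂, fun δ hδ hδ' => ?_⟩
  have h1 := hA2 δ hδ (le_trans (le_max_left _ _) hδ')
  have h2 := hB2 δ hδ (le_trans (le_max_right _ _) hδ')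
  have := ((s.ultra δ hδ).1.2.2.2.2.1) _ _ h1 h2
  have heq : (A ∩ s.Z δ) ∩ (B ∩ s.Z δ) = (A ∩ B) ∩ s.Z δ := by
    ext y; simp only [mem_inter_iff]; tauto
  rwa [heq] at this

-- fil is upward closed (within Iio lam)
lemma fil_mono {lam : Ordinal} (s : QZero lam) {A B : Set Ordinal}
    (hA : A ∈ fil s) (hAB : A ⊆ B) (hB : B ⊆ Iio lam) : B ∈ fil s := by
  obtain ⟨hA1, ε, hε, hA2⟩ := hA
  refine ⟨hB, ε, hε, fun δ hδ hδ' => ?_⟩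
  have h1 := hA2 δ hδ hδ'
  exact ((s.ultra δ hδ).1.2.2.2.1) _ _ h1 (inter_subset_inter_left _ hAB)
    (inter_subset_right)

/-- If `G*` is `≤⁰`-directed and downward closed, `p ∈ G*` is restrictable to `⟨X,C⟩`
and `⋃_{x∈X} Z^p_x ∈ fil(G*)`, then the restriction `p↾⟨X,C⟩` belongs to `G*`. -/
theorem statement13 (κ : Cardinal.{0}) (hreg : κ.IsRegular) (hunc : Cardinal.aleph0 < κ)
    (G : Set (QZero κ.ord))
    (hdir : ∀ p ∈ G, ∀ q ∈ G, ∃ r ∈ G, le0 p r ∧ le0 q r)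
    (hdc : ∀ p q : QZero κ.ord, q ∈ G → le0 p q → p ∈ G)
    (p : QZero κ.ord) (hp : p ∈ G) (X C : Set Ordinal)
    (h : Restrictable κ p X C)
    (hZ : (⋃ x ∈ X, p.Z x) ∈ filG G) :
    ∀ q : QZero κ.ord, q.C = C →
      (∀ α ∈ C, ∀ x ∈ X ∩ Ico α (nextIn C α),
        q.d α = {A : Set Ordinal | A ⊆ Ico α (nextIn C α) ∧ A ∩ p.Z x ∈ p.d x}) →
      q ∈ G := by
  intro q hqC hqd
  set U : Set Ordinal := ⋃ x ∈ X, p.Z x with hU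
  obtain ⟨hXC, _, hCclub, hCsub, huniq⟩ := h
  -- get r ∈ G with U ∈ fil r
  have hZ' : ∃ r ∈ G, U ∈ fil r := by
    simpa only [filG, mem_iUnion, exists_prop] using hZ
  obtain ⟨r, hr, hUr⟩ := hZ'
  -- directedness: s above p and r
  obtain ⟨s, hsG, hps, hrs⟩ := hdir p hp r hr
  have hUs : U ∈ fil s := hrs hUr
  -- 0 ∉ C (all elements are limit ordinals of p.C)
  have h0C : (0 : Ordinal) ∉ C := fun hh => (p.limit 0 (hCsub hh)).ne_bot rfl
  -- it suffices to show fil q ⊆ fil s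
  refine hdc q s hsG ?_
  intro A hA
  obtain ⟨hA1, ε, hε, hA2⟩ := hA
  -- key: for α ∈ C with ε ≤ α and x the unique point of X in [α, nextIn C α),
  -- A ∩ p.Z x ∈ p.d x
  have key : ∀ α ∈ C, ε ≤ α → ∀ x ∈ X ∩ Ico α (nextIn C α), A ∩ p.Z x ∈ p.d x := by
    intro α hα hεα x hx
    have h1 := hA2 α (hqC ▸ hα) hεα
    rw [hqd α hα x hx] at h1
    have hZsub : p.Z x ⊆ Ico α (nextIn C α) := by
      intro y hy
      have hακ.ord : α < κ.ord := hCclub.1 hα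
      have hnext : nextIn C α ∈ C := (nextIn_spec hCclub hακ.ord).1
      refine ⟨le_trans hx.2.1 hy.1, lt_of_lt_of_le hy.2 ?_⟩
      exact nextIn_le (hCsub hnext) hx.2.2
    have heq : (A ∩ q.Z α) ∩ p.Z x = A ∩ p.Z x := by
      have : q.Z α = Ico α (nextIn C α) := by rw [QZero.Z, hqC]
      rw [this]
      ext y
      simp only [mem_inter_iff]
      exact ⟨fun hy => ⟨hy.1.1, hy.2⟩, fun hy => ⟨⟨hy.1, hZsub hy.2⟩, hy.2⟩⟩
    have h2 : (A ∩ q.Z α) ∩ p.Z x ∈ p.d x := h1.2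
    rwa [heq] at h2
  -- define B = A ∪ (Iio κ.ord \ U); show B ∈ fil p
  set B : Set Ordinal := A ∪ (Iio κ.ord \ U) with hB
  have hBκ.ord : B ⊆ Iio κ.ord := union_subset hA1 diff_subset
  have hBp : B ∈ fil p := by
    have hεκ.ord : ε < κ.ord := hε
    obtain ⟨hε₀C, hεε₀, hε₀κ.ord⟩ := nextIn_spec hCclub hεκ.ord
    refine ⟨hBκ.ord, nextIn C ε, hε₀κ.ord, fun δ hδ hδ' => ?_⟩
    have hδκ.ord : δ < κ.ord := p.club.1 hδ
    by_cases hδX : δ ∈ X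
    · -- find α ∈ C with nextIn C ε ≤ α ≤ δ < nextIn C α
      obtain ⟨α, hαC, hγα, hαδ, hδnext⟩ := pred_in_club hCclub h0C hε₀C hδ' hδκ.ord
      have hεα : ε ≤ α := le_trans (le_of_lt hεε₀) hγα
      have hxmem : δ ∈ X ∩ Ico α (nextIn C α) := ⟨hδX, hαδ, hδnext⟩
      have h1 := key α hαC hεα δ hxmem
      -- A ∩ p.Z δ ⊆ B ∩ p.Z δ ⊆ p.Z δ
      exact ((p.ultra δ hδ).1.2.2.2.1) _ _ h1
        (inter_subset_inter_left _ subset_union_left) inter_subset_right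
    · -- p.Z δ disjoint from U, so B ∩ p.Z δ = p.Z δ ∈ p.d δ
      have hZU : p.Z δ ∩ U = ∅ := by
        apply eq_empty_of_forall_notMem
        rintro y ⟨hy1, hy2⟩
        simp only [hU, mem_iUnion] at hy2
        obtain ⟨x, hxX, hy3⟩ := hy2
        have hne : δ ≠ x := fun hh => hδX (hh ▸ hxX)
        have := Z_disjoint p hδ (hXC hxX) hne
        have hh : y ∈ (∅ : Set Ordinal) := by rw [← this]; exact ⟨hy1, hy3⟩
        exact hh
      have hZB : p.Z δ ⊆ B := by
        intro y hy
        right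
        refine ⟨lt_of_lt_of_le hy.2 (le_of_lt (nextIn_spec p.club hδκ.ord).2.2), ?_⟩
        intro hyU
        have hh : y ∈ (∅ : Set Ordinal) := by rw [← hZU]; exact ⟨hy, hyU⟩
        exact hh
      have : B ∩ p.Z δ = p.Z δ := inter_eq_right.2 hZB
      rw [this]
      exact (p.ultra δ hδ).1.2.1
  -- B ∈ fil s, so B ∩ U ∈ fil s, and B ∩ U ⊆ A, so A ∈ fil s
  have hBs : B ∈ fil s := hps hBp
  have hBU : B ∩ U ∈ fil s := fil_inter s hBs hUs
  refine fil_mono s hBU ?_ hA1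
  rintro y ⟨hy1, hy2⟩
  rcases hy1 with hy1 | hy1
  · exact hy1
  · exact absurd hy2 hy1.2
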